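/- Let f : ℝ≥0 → ℝ be concave, f(0) = 0, and suppose there exist 0 < p₁ ≤ p₂ with f(p₁ + p₂) = f(p₁) + f(p₂). Then f is linear on the interval [0, p₁ + p₂], i.e. f(p) = (f(p₁)/p₁)·p for all p ∈ [0, p₁ + p₂]. -/

import Mathlib

/-- If `f` is concave on `[0,∞)` with `f 0 = 0` and equality
`f (p₁ + p₂) = f p₁ + f p₂` holds for some `0 < p₁ ≤ p₂`, then `f` is linear
on `[0, p₁ + p₂]`. -/
theorem concave_linear_of_additivity
    (f : ℝ → ℝ)
    (hconc : ConcaveOn ℝ (Set.Ici (0 : ℝ)) f)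
    (h0 : f 0 = 0)
    (p₁ p₂ : ℝ) (hp₁ : 0 < p₁) (hp₁₂ : p₁ ≤ p₂)
    (heq : f (p₁ + p₂) = f p₁ + f p₂) :
    ∀ p ∈ Set.Icc (0 : ℝ) (p₁ + p₂), f p = (f p₁ / p₁) * p := by
  have hp₂ : 0 < p₂ := lt_of_lt_of_le hp₁ hp₁₂
  set s : ℝ := p₁ + p₂ with hs_def
  have hs : 0 < s := by positivity
  have hmem0 : (0:ℝ) ∈ Set.Ici (0:ℝ) := Set.mem_Ici.mpr le_rfl
  have hmems : s ∈ Set.Ici (0:ℝ) := le_of_lt hs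
  -- lower bound on [0,s]
  have key : ∀ x, 0 ≤ x → x ≤ s → (x/s) * f s ≤ f x := by
    intro x hx hxs
    have ha : (0:ℝ) ≤ x/s := by positivity
    have hb : (0:ℝ) ≤ 1 - x/s := by
      have : x/s ≤ 1 := by rw [div_le_one hs]; exact hxs
      linarith
    have h := hconc.2 hmems hmem0 ha hb (by ring)
    have hx' : (x/s) • s + (1 - x/s) • (0:ℝ) = x := by
      field_simp
      simp [smul_eq_mul, hs.ne']
    rw [hx'] at h
    simpa [h0, smul_eq_mul] using h
  have h1 := key p₁ hp₁.le (by simp [hs_def]; linarith)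
  have h2 := key p₂ hp₂.le (by simp [hs_def]; linarith)
  have hfp₁ : f p₁ = (p₁/s) * f s := by
    have hsum : (p₁/s) * f s + (p₂/s) * f s = f s := by
      field_simp
      ring
    linarith
  intro p hp
  obtain ⟨hp0, hps⟩ := hp
  have hlow := key p hp0 hps
  -- upper bound
  have hupp : f p ≤ (p/s) * f s := by
    rcases le_or_gt p p₁ with hle | hlt
    · -- p₁ between p and s
      have hps' : p < s := lt_of_le_of_lt hle (by simp [hs_def]; linarith)
      set t : ℝ := (s - p₁)/(s - p) with ht_def
      have hsp : 0 < s - p := by linarith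
      have ht0 : 0 < t := by
        apply div_pos
        · simp [hs_def]; linarith
        · exact hsp
      have ht1 : t ≤ 1 := by
        rw [div_le_one hsp]; linarith
      have hmem_p : p ∈ Set.Ici (0:ℝ) := hp0
      have hta : (0:ℝ) ≤ t := ht0.le
      have htb : (0:ℝ) ≤ 1 - t := by linarith
      have htab : t + (1 - t) = 1 := by ring
      have h := hconc.2 hmem_p hmems hta htb htab
      have hx' : t • p + (1 - t) • s = p₁ := by
        simp only [smul_eq_mul, ht_def]
        field_simp
        ring
      rw [hx'] at h
      simp only [smul_eq_mul] at h
      -- t * f p + (1 - t) * f s ≤ f p₁ = (p₁/s) f s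
      -- want f p ≤ (p/s) f s, i.e. t * f p ≤ t * (p/s) * f s
      rw [hfp₁] at h
      have hkey : t * f p ≤ t * ((p/s) * f s) := by
        have : p₁ / s - (1 - t) = t * (p / s) := by
          simp only [ht_def]
          field_simp
          ring
        have h2' : t * (p/s * f s) = p₁/s * f s - (1-t) * f s := by
          rw [show t * (p/s * f s) = (t*(p/s)) * f s from by ring, ← this]; ring
        linarith
      exact le_of_mul_le_mul_left hkey ht0
    · -- p₁ ≤ p, p₁ = (p₁/p) * p
      have hpp : 0 < p := lt_trans hp₁ hlt
      have ha : (0:ℝ) ≤ p₁/p := by positivity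
      have hb : (0:ℝ) ≤ 1 - p₁/p := by
        have : p₁/p ≤ 1 := by rw [div_le_one hpp]; linarith
        linarith
      have hmem_p : p ∈ Set.Ici (0:ℝ) := hp0
      have h := hconc.2 hmem_p hmem0 ha hb (by ring)
      have hx' : (p₁/p) • p + (1 - p₁/p) • (0:ℝ) = p₁ := by
        field_simp
        simp [smul_eq_mul, hpp.ne']
      rw [hx'] at h
      simp only [smul_eq_mul, h0, mul_zero, add_zero] at h
      rw [hfp₁] at h
      -- (p₁/p) * f p ≤ (p₁/s) * f s
      calc f p = (p/p₁) * ((p₁/p) * f p) := by field_simp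
        _ ≤ (p/p₁) * ((p₁/s) * f s) := mul_le_mul_of_nonneg_left h (by positivity)
        _ = (p/s) * f s := by field_simp
  have hfp : f p = (p/s) * f s := le_antisymm hupp hlow
  rw [hfp, hfp₁]
  field_simp
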